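/- Let P ⊂ ℝ^d be a centrally symmetric polytope with nonempty interior, and let u and v be vertices (extreme points) of P, so that −v is also a vertex of P. If the translates P + u and P + v have intersecting interiors, then the midpoint (u − v)/2 = (u + (−v))/2 lies in the interior of P; consequently, if moreover u ≠ −v and the segment [u, −v] is not all of P, the closed segment [u, −v] is not a face of P (in particular, u and −v are not connected by an edge of P). -/

import Mathlib

open Set

/-- A polytope: the convex hull of a finite set of points. -/
def IsPolytope {E : Type*} [AddCommGroup E] [Module ℝ E] (P : Set E) : Prop :=
  ∃ V : Finset E, P = convexHull ℝ (V : Set E)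

/-- A (nonempty, proper) exposed face of `P`. -/
def IsProperFace {E : Type*} [AddCommGroup E] [Module ℝ E] [TopologicalSpace E]
    (P F : Set E) : Prop :=
  F.Nonempty ∧ F ≠ P ∧ IsExposed ℝ P F

/-- An extreme subset other than the whole set misses the interior. -/
lemma extreme_disjoint_interior {d : ℕ} {P F : Set (Fin d → ℝ)}
    (hF : IsExtreme ℝ P F) (hne : F ≠ P) {m : Fin d → ℝ}
    (hmF : m ∈ F) (hmI : m ∈ interior P) : False := by
  obtain ⟨p, hpP, hpF⟩ : ∃ p ∈ P, p ∉ F := by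
    by_contra h
    push_neg at h
    exact hne (hF.1.antisymm h)
  have hmp : m ≠ p := fun h => hpF (h ▸ hmF)
  obtain ⟨r, hr, hball⟩ := Metric.isOpen_iff.1 isOpen_interior m hmI
  set ε : ℝ := r / (2 * dist m p) with hε
  have hdist : (0:ℝ) < dist m p := dist_pos.2 hmp
  have hεpos : 0 < ε := by positivity
  set q : Fin d → ℝ := m + ε • (m - p) with hq
  have hqP : q ∈ P := by
    apply interior_subset
    apply hball
    rw [Metric.mem_ball, hq]
    have : dist (m + ε • (m - p)) m = ε * dist m p := by
      rw [dist_eq_norm]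
      simp [norm_smul, abs_of_pos hεpos, dist_eq_norm]
    rw [this, hε]
    rw [div_mul_eq_mul_div, mul_comm]
    rw [div_lt_iff₀ (by positivity)]
    nlinarith
  have hmseg : m ∈ openSegment ℝ p q := by
    refine ⟨ε / (1 + ε), 1 / (1 + ε), by positivity, by positivity, ?_, ?_⟩
    · field_simp
      ring
    · rw [hq]
      have h1ε : (1:ℝ) + ε ≠ 0 := by positivity
      rw [smul_add, smul_smul]
      rw [show (1 / (1 + ε)) * ε = ε / (1 + ε) by ring, smul_sub]
      rw [show (ε / (1+ε)) • p + ((1 / (1+ε)) • m + ((ε / (1+ε)) • m - (ε / (1+ε)) • p))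
          = ((1 / (1+ε)) + (ε / (1+ε))) • m by module]
      rw [show (1 / (1+ε)) + (ε / (1+ε)) = (1:ℝ) by field_simp]
      simp
  exact hpF (hF.2 hpP hqP hmF hmseg)

theorem stmt0 {d : ℕ} (P : Set (Fin d → ℝ))
    (hpoly : IsPolytope P) (hsym : P = -P) (hint : (interior P).Nonempty)
    (u v : Fin d → ℝ)
    (hu : u ∈ P.extremePoints ℝ) (hv : v ∈ P.extremePoints ℝ)
    (hmv : -v ∈ P.extremePoints ℝ)
    (hmeet : (interior ((· + u) '' P) ∩ interior ((· + v) '' P)).Nonempty) :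
    midpoint ℝ u (-v) ∈ interior P ∧
      (u ≠ -v → segment ℝ u (-v) ≠ P → ¬ IsProperFace P (segment ℝ u (-v))) := by
  obtain ⟨V, hV⟩ := hpoly
  have hconv : Convex ℝ P := hV ▸ convex_convexHull ℝ _
  obtain ⟨x, hx1, hx2⟩ := hmeet
  have himg : ∀ w : Fin d → ℝ, interior ((· + w) '' P) = (· + w) '' interior P := by
    intro w
    exact ((Homeomorph.addRight w).image_interior P).symm
  rw [himg u] at hx1
  rw [himg v] at hx2
  obtain ⟨y, hy, hyx⟩ := hx1
  obtain ⟨z, hz, hzx⟩ := hx2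
  -- -y ∈ interior P
  have hny : -y ∈ interior P := by
    have h1 : interior (-P) = -interior P := by
      rw [← Set.image_neg_eq_neg, ← Set.image_neg_eq_neg]
      exact ((Homeomorph.neg (Fin d → ℝ)).image_interior P).symm
    rw [hsym, h1]
    exact Set.neg_mem_neg.2 hy
  have hmid : midpoint ℝ u (-v) ∈ interior P := by
    have hmem : midpoint ℝ z (-y) ∈ interior P :=
      (hconv.interior).segment_subset hz hny (midpoint_mem_segment z (-y))
    have : midpoint ℝ z (-y) = midpoint ℝ u (-v) := by
      have huv : z - y = u - v := by
        have h : y + u = z + v := hyx.trans hzx.symm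
        rw [sub_eq_sub_iff_add_eq_add, ← h]
        abel
      rw [midpoint_eq_smul_add, midpoint_eq_smul_add]
      rw [show z + -y = z - y by abel, show u + -v = u - v by abel, huv]
    rwa [this] at hmem
  refine ⟨hmid, fun hne hsegne hface => ?_⟩
  obtain ⟨hFne, hFP, hexp⟩ := hface
  exact extreme_disjoint_interior hexp.isExtreme hFP (midpoint_mem_segment u (-v)) hmid
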